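/- Δ_{12,33} is not a suspension: there do not exist distinct vertices v, w ∈ V with {v,w} not a face of Δ_{12,33} such that Δ_{12,33} = {F ∪ G : F ∈ {∅,{v},{w}}, G a face of Δ_{12,33} with G ⊆ V∖{v,w}}. -/

import Mathlib

namespace Delta

abbrev V : Type := Fin 12

def x1 : V := 0
def x2 : V := 1
def x3 : V := 2
def y1 : V := 3
def y2 : V := 4
def y3 : V := 5
def z1 : V := 6
def z2 : V := 7
def z3 : V := 8
def v1 : V := 9
def v2 : V := 10
def v3 : V := 11

/-- The 33 facets of `Δ_{12,33}`, in the order they are listed. -/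
def facetList : List (Finset V) :=
  [{x1,y2,y3,z1}, {y2,y3,z1,v2}, {y1,y2,y3,v2}, {y1,y2,z3,v2}, {y2,z1,z3,v2},
   {x3,y2,z1,z3}, {x1,x3,y2,z1}, {x1,x3,z1,v3}, {x3,y1,y2,z3}, {z1,z2,z3,v2},
   {x3,y1,y2,v1}, {x2,x3,y1,v1}, {x3,z1,z3,v3}, {z1,z2,z3,v3}, {x1,z1,z2,v3},
   {x1,y3,z1,z2}, {y3,z1,z2,v2}, {y1,y3,z2,v2}, {x1,x3,y2,v1}, {x1,x2,x3,v1},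
   {x1,y2,y3,v1}, {x2,x3,y1,z3}, {x2,x3,z3,v3}, {y1,z2,z3,v2}, {x2,y1,z2,z3},
   {x2,y1,y3,z2}, {y1,y2,y3,v1}, {x2,y1,y3,v1}, {x1,x2,y3,v1}, {x1,x2,y3,z2},
   {x1,x2,x3,v3}, {x1,x2,z2,v3}, {x2,z2,z3,v3}]

/-- The facets of `Δ_{12,33}` as a finite set. -/
def facets : Finset (Finset V) := facetList.toFinset

/-- `F` is a face of `Δ_{12,33}` iff it is a subset of one of the 33 facets. -/
def IsFace (F : Finset V) : Prop := ∃ G ∈ facets, F ⊆ G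

instance : DecidablePred IsFace := fun F =>
  inferInstanceAs (Decidable (∃ G ∈ facets, F ⊆ G))

def HA : Finset V := {y1,y2,y3,v2}
def HB : Finset V := {z1,z2,z3,v3}
def HC : Finset V := {x1,x2,x3,v1}

lemma facet_card' : ∀ G ∈ facetList, G.card = 4 := by
  intro G hG
  fin_cases hG <;> decide

lemma facet_card : ∀ G ∈ facets, G.card = 4 := fun G hG =>
  facet_card' G (List.mem_toFinset.mp hG)

set_option maxRecDepth 2000 in
lemma memA : HA ∈ facetList := by decide
set_option maxRecDepth 2000 in
lemma memB : HB ∈ facetList := by decide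
set_option maxRecDepth 2000 in
lemma memC : HC ∈ facetList := by decide

lemma exists_avoid (v w : V) : ∃ H ∈ facets, v ∉ H ∧ w ∉ H := by
  have dAB : ∀ u : V, ¬(u ∈ HA ∧ u ∈ HB) := by decide
  have dAC : ∀ u : V, ¬(u ∈ HA ∧ u ∈ HC) := by decide
  have dBC : ∀ u : V, ¬(u ∈ HB ∧ u ∈ HC) := by decide
  by_cases h1 : v ∈ HA ∨ w ∈ HA
  · by_cases h2 : v ∈ HB ∨ w ∈ HB
    · refine ⟨HC, List.mem_toFinset.mpr memC, ?_, ?_⟩ <;>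
      · intro h
        have := dAB v; have := dAB w; have := dAC v; have := dAC w
        have := dBC v; have := dBC w
        tauto
    · push_neg at h2
      exact ⟨HB, List.mem_toFinset.mpr memB, h2.1, h2.2⟩
  · push_neg at h1
    exact ⟨HA, List.mem_toFinset.mpr memA, h1.1, h1.2⟩

/-- `Δ_{12,33}` is not a suspension: there are no distinct
non-adjacent vertices `v, w` such that every face of `Δ_{12,33}` is exactly
a union `A ∪ G` with `A ∈ {∅, {v}, {w}}` and `G` a face avoiding `v` and `w`. -/
theorem delta_not_suspension :
    ¬ ∃ v w : V, v ≠ w ∧ ¬ IsFace {v, w} ∧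
      (∀ F : Finset V, IsFace F ↔
        ∃ A ∈ ({∅, {v}, {w}} : Set (Finset V)),
          ∃ G : Finset V, IsFace G ∧ v ∉ G ∧ w ∉ G ∧ F = A ∪ G) := by
  rintro ⟨v, w, _, _, hiff⟩
  obtain ⟨H, hH, hv, hw⟩ := exists_avoid v w
  have hface : IsFace (insert v H) := by
    rw [hiff]
    exact ⟨{v}, Or.inr (Or.inl rfl), H, ⟨H, hH, le_refl _⟩, hv, hw, by
      rw [Finset.insert_eq]⟩
  obtain ⟨G, hG, hsub⟩ := hface
  have h5 : (insert v H).card = 5 := by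
    rw [Finset.card_insert_of_notMem hv, facet_card H hH]
  have := Finset.card_le_card hsub
  rw [h5, facet_card G hG] at this
  omega


end Delta
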